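/- Let X, A, Y, B be finite nonempty index types with |X| = |Y| = d. Let R be a positive semidefinite complex matrix indexed by (X × A × Y × B) × (X × A × Y × B). Then R satisfies Tr_{Y×B}[R] = 1_{X×A} and Tr_{X×B}[R] = 1_{Y×A} (i.e., R is the Choi operator of a partially bistochastic channel, bistochastic in the pair X–Y) if and only if there exist a Hermitian matrix S indexed by X × A × Y × B with Tr_B[S] = 0 and a Hermitian matrix T indexed by X × A × Y with Tr_X[T] = 0 and Tr_Y[T] = 0, such that R = (1/(d·|B|))·1_{X×A×Y×B} + S + T ⊗ 1_B. -/

import Mathlib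

open Matrix ComplexOrder

/-- A PSD matrix `R` on `X × A × Y × B` is the Choi operator of a
partially bistochastic channel (bistochastic in the pair `X`–`Y`), i.e.
`Tr_{Y×B}[R] = 1_{X×A}` and `Tr_{X×B}[R] = 1_{Y×A}`, if and only if
`R = (1/(d·|B|))·1 + S + T ⊗ 1_B` with `S` Hermitian, `Tr_B[S] = 0`, and `T`
Hermitian with `Tr_X[T] = 0` and `Tr_Y[T] = 0`. -/
theorem stmt0 {X A Y B : Type*} [Fintype X] [Fintype A] [Fintype Y] [Fintype B]
    [DecidableEq X] [DecidableEq A] [DecidableEq Y] [DecidableEq B]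
    [Nonempty X] [Nonempty A] [Nonempty Y] [Nonempty B]
    (d : ℕ) (hX : Fintype.card X = d) (hY : Fintype.card Y = d)
    (R : Matrix (X × A × Y × B) (X × A × Y × B) ℂ) (hR : R.PosSemidef) :
    ((∀ x a x' a', (∑ y : Y, ∑ b : B, R (x, a, y, b) (x', a', y, b)) =
        if (x, a) = (x', a') then 1 else 0) ∧
     (∀ y a y' a', (∑ x : X, ∑ b : B, R (x, a, y, b) (x, a', y', b)) =
        if (y, a) = (y', a') then 1 else 0)) ↔
    ∃ (S : Matrix (X × A × Y × B) (X × A × Y × B) ℂ)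
      (T : Matrix (X × A × Y) (X × A × Y) ℂ),
      S.IsHermitian ∧
      (∀ x a y x' a' y', (∑ b : B, S (x, a, y, b) (x', a', y', b)) = 0) ∧
      T.IsHermitian ∧
      (∀ a y a' y', (∑ x : X, T (x, a, y) (x, a', y')) = 0) ∧
      (∀ x a x' a', (∑ y : Y, T (x, a, y) (x', a', y)) = 0) ∧
      R = ((d : ℂ) * (Fintype.card B : ℂ))⁻¹ • 1 + S +
        Matrix.of (fun (u u' : X × A × Y × B) =>
          T (u.1, u.2.1, u.2.2.1) (u'.1, u'.2.1, u'.2.2.1) *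
            (if u.2.2.2 = u'.2.2.2 then 1 else 0)) := by
  have hdpos : 0 < d := hX ▸ Fintype.card_pos
  have hdne : (d : ℂ) ≠ 0 := Nat.cast_ne_zero.mpr hdpos.ne'
  have hNne : ((Fintype.card B : ℂ)) ≠ 0 := Nat.cast_ne_zero.mpr Fintype.card_ne_zero
  set N : ℂ := (Fintype.card B : ℂ) with hNdef
  set c : ℂ := ((d : ℂ) * N)⁻¹ with hcdef
  constructor
  · rintro ⟨h1, h2⟩
    set T : Matrix (X × A × Y) (X × A × Y) ℂ := Matrix.of (fun u u' =>
      N⁻¹ * (∑ b : B, R (u.1, u.2.1, u.2.2, b) (u'.1, u'.2.1, u'.2.2, b))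
        - c * (if u = u' then 1 else 0)) with hTdef
    set K : Matrix (X × A × Y × B) (X × A × Y × B) ℂ := Matrix.of (fun u u' =>
      T (u.1, u.2.1, u.2.2.1) (u'.1, u'.2.1, u'.2.2.1) *
        (if u.2.2.2 = u'.2.2.2 then 1 else 0)) with hKdef
    have hTherm : T.IsHermitian := by
      ext i j
      simp only [conjTranspose_apply, hTdef, of_apply, star_sub, star_mul', star_inv₀,
        apply_ite star, star_one, star_zero]
      rw [show star (∑ b : B, R (j.1, j.2.1, j.2.2, b) (i.1, i.2.1, i.2.2, b))
          = ∑ b : B, R (i.1, i.2.1, i.2.2, b) (j.1, j.2.1, j.2.2, b) by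
        rw [star_sum]; exact Finset.sum_congr rfl fun b _ => hR.1.apply _ _]
      have hNs : star N = N := by simp [hNdef]
      have hcs : star c = c := by simp [hcdef, hNdef]
      rw [hNs, hcs]
      simp [eq_comm]
    have hKherm : K.IsHermitian := by
      ext i j
      simp only [conjTranspose_apply, hKdef, of_apply, star_mul', apply_ite star,
        star_one, star_zero]
      rw [hTherm.apply]
      by_cases h : i.2.2.2 = j.2.2.2
      · simp [h]
      · have h' : ¬ j.2.2.2 = i.2.2.2 := fun hh => h hh.symm
        simp [h, h']
    have hc1 : (c • (1 : Matrix (X × A × Y × B) (X × A × Y × B) ℂ)).IsHermitian := by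
      have hcs : star c = c := by simp [hcdef, hNdef]
      unfold Matrix.IsHermitian
      rw [conjTranspose_smul, conjTranspose_one, hcs]
    refine ⟨R - c • 1 - K, T, (hR.1.sub hc1).sub hKherm, ?_, hTherm, ?_, ?_, ?_⟩
    · intro x a y x' a' y'
      have e1 : ∀ b : B, (R - c • 1 - K) (x,a,y,b) (x',a',y',b)
          = R (x,a,y,b) (x',a',y',b)
            - c * (if ((x:X),(a:A),(y:Y)) = (x',a',y') then 1 else 0)
            - (N⁻¹ * (∑ b' : B, R (x,a,y,b') (x',a',y',b'))
              - c * (if ((x:X),(a:A),(y:Y)) = (x',a',y') then 1 else 0)) := by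
        intro b
        simp only [Matrix.sub_apply, Matrix.smul_apply, smul_eq_mul, hKdef, hTdef, of_apply, one_apply]
        rw [if_congr (show ((x,a,y,b) = ((x':X),(a':A),(y':Y),b)) ↔ ((x,a,y) = ((x':X),(a':A),(y':Y))) by
          simp [Prod.ext_iff]) rfl rfl]
        simp
      rw [Finset.sum_congr rfl fun b _ => e1 b]
      rw [Finset.sum_sub_distrib, Finset.sum_sub_distrib, Finset.sum_const, Finset.card_univ,
        nsmul_eq_mul, ← hNdef, Finset.sum_const, Finset.card_univ, nsmul_eq_mul, ← hNdef]
      rw [show N * (N⁻¹ * (∑ b' : B, R (x,a,y,b') (x',a',y',b'))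
          - c * (if ((x:X),(a:A),(y:Y)) = (x',a',y') then 1 else 0))
        = (∑ b' : B, R (x,a,y,b') (x',a',y',b'))
          - N * (c * (if ((x:X),(a:A),(y:Y)) = (x',a',y') then 1 else 0)) by
        rw [mul_sub, ← mul_assoc, mul_inv_cancel₀ hNne, one_mul]]
      ring
    · intro a y a' y'
      have e1 : ∀ x : X, T (x,a,y) (x,a',y')
          = N⁻¹ * (∑ b : B, R (x,a,y,b) (x,a',y',b))
            - c * (if ((y:Y),(a:A)) = (y',a') then 1 else 0) := by
        intro x
        simp only [hTdef, of_apply]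
        rw [if_congr (show (((x:X),(a:A),(y:Y)) = (x,a',y')) ↔ (((y:Y),(a:A)) = (y',a')) by
          constructor <;> intro h <;> simp_all [Prod.ext_iff]) rfl rfl]
      rw [Finset.sum_congr rfl fun x _ => e1 x, Finset.sum_sub_distrib, ← Finset.mul_sum,
        h2 y a y' a', Finset.sum_const, Finset.card_univ, hX, nsmul_eq_mul, hcdef, mul_inv]
      ring_nf
      rw [mul_assoc, mul_inv_cancel₀ hdne, mul_one, sub_self]
    · intro x a x' a'
      have e1 : ∀ y : Y, T (x,a,y) (x',a',y)
          = N⁻¹ * (∑ b : B, R (x,a,y,b) (x',a',y,b))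
            - c * (if ((x:X),(a:A)) = (x',a') then 1 else 0) := by
        intro y
        simp only [hTdef, of_apply]
        rw [if_congr (show (((x:X),(a:A),(y:Y)) = (x',a',y)) ↔ (((x:X),(a:A)) = (x',a')) by
          simp [Prod.ext_iff]) rfl rfl]
      rw [Finset.sum_congr rfl fun y _ => e1 y, Finset.sum_sub_distrib, ← Finset.mul_sum,
        h1 x a x' a', Finset.sum_const, Finset.card_univ, hY, nsmul_eq_mul, hcdef, mul_inv]
      ring_nf
      rw [mul_assoc, mul_inv_cancel₀ hdne, mul_one, sub_self]
    · rw [← hKdef]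
      abel
  · rintro ⟨S, T, hS, hSB, hT, hTX, hTY, rfl⟩
    constructor
    · intro x a x' a'
      have e1 : ∀ (y : Y) (b : B),
          (c • 1 + S + Matrix.of (fun (u u' : X × A × Y × B) =>
            T (u.1, u.2.1, u.2.2.1) (u'.1, u'.2.1, u'.2.2.1) *
              (if u.2.2.2 = u'.2.2.2 then 1 else 0))) (x,a,y,b) (x',a',y,b)
          = c * (if ((x:X),(a:A)) = (x',a') then 1 else 0)
            + S (x,a,y,b) (x',a',y,b) + T (x,a,y) (x',a',y) := by
        intro y b
        simp only [Matrix.add_apply, Matrix.smul_apply, smul_eq_mul, of_apply, one_apply]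
        rw [if_congr (show ((x,a,y,b) = ((x':X),(a':A),y,b)) ↔ (((x:X),(a:A)) = (x',a')) by
          simp [Prod.ext_iff]) rfl rfl]
        simp
      rw [Finset.sum_congr rfl fun y _ => Finset.sum_congr rfl fun b _ => e1 y b]
      simp only [Finset.sum_add_distrib, hSB, Finset.sum_const, Finset.card_univ,
        nsmul_eq_mul, Finset.sum_const_zero, add_zero, ← Finset.mul_sum, hTY, mul_zero]
      rw [← hNdef, hY, hcdef]
      by_cases h : ((x:X),(a:A)) = (x',a')
      · simp only [h, if_pos rfl]
        field_simp
      · simp [h]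
    · intro y a y' a'
      have e1 : ∀ (x : X) (b : B),
          (c • 1 + S + Matrix.of (fun (u u' : X × A × Y × B) =>
            T (u.1, u.2.1, u.2.2.1) (u'.1, u'.2.1, u'.2.2.1) *
              (if u.2.2.2 = u'.2.2.2 then 1 else 0))) (x,a,y,b) (x,a',y',b)
          = c * (if ((y:Y),(a:A)) = (y',a') then 1 else 0)
            + S (x,a,y,b) (x,a',y',b) + T (x,a,y) (x,a',y') := by
        intro x b
        simp only [Matrix.add_apply, Matrix.smul_apply, smul_eq_mul, of_apply, one_apply]
        rw [if_congr (show ((x,a,y,b) = ((x:X),(a':A),y',b)) ↔ (((y:Y),(a:A)) = (y',a')) by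
          constructor <;> intro h <;> simp_all [Prod.ext_iff]) rfl rfl]
        simp
      rw [Finset.sum_congr rfl fun x _ => Finset.sum_congr rfl fun b _ => e1 x b]
      simp only [Finset.sum_add_distrib, hSB, Finset.sum_const, Finset.card_univ,
        nsmul_eq_mul, Finset.sum_const_zero, add_zero]
      rw [← Finset.mul_sum, hTX a y a' y', mul_zero, add_zero, ← hNdef, hX, hcdef]
      by_cases h : ((y:Y),(a:A)) = (y',a')
      · simp only [h, if_pos rfl]
        field_simp
      · simp [h]
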